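/- The polynomial \overline{W}_K(t) = W_K(t) - W_K(t^{-1}) is invariant under crossing changes, where W_K(t) = Σ_{c : Ind(c) ≠ 0} ω(c) t^{Ind(c)}. -/

import Mathlib

open Finset LaurentPolynomial

/-- `W̄_K(t) = W_K(t) - W_K(t⁻¹)` is invariant under a crossing change.
A Gauss diagram is abstracted by its finite set `C` of chords together with the index
function `Ind : C → ℤ` and writhe `ω : C → ℤ`.  A crossing change at `c₀` sends
`Ind c₀ ↦ -Ind c₀`, `ω c₀ ↦ -ω c₀` and fixes all other chords.  Here
`W_K(t) = ∑_{Ind c ≠ 0} ω c • t^(Ind c)` and `W_K(t⁻¹) = ∑_{Ind c ≠ 0} ω c • t^(-Ind c)`. -/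
theorem writheBar_crossing_change_invariant {C : Type} [Fintype C] [DecidableEq C]
    (Ind ω Ind' ω' : C → ℤ) (c₀ : C)
    (hI : Ind' c₀ = - Ind c₀) (hw : ω' c₀ = - ω c₀)
    (hIother : ∀ a : C, a ≠ c₀ → Ind' a = Ind a)
    (hwother : ∀ a : C, a ≠ c₀ → ω' a = ω a) :
    ((∑ c ∈ univ.filter (fun c => Ind c ≠ 0), ω c • T (Ind c)) -
        (∑ c ∈ univ.filter (fun c => Ind c ≠ 0), ω c • T (-(Ind c)))
        : LaurentPolynomial ℤ) =
      (∑ c ∈ univ.filter (fun c => Ind' c ≠ 0), ω' c • T (Ind' c)) -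
        (∑ c ∈ univ.filter (fun c => Ind' c ≠ 0), ω' c • T (-(Ind' c))) := by
  have hfilter : univ.filter (fun c => Ind' c ≠ 0) = univ.filter (fun c => Ind c ≠ 0) := by
    apply Finset.filter_congr
    intro a _
    by_cases h : a = c₀
    · subst h; simp [hI]
    · simp [hIother a h]
  rw [hfilter, ← Finset.sum_sub_distrib, ← Finset.sum_sub_distrib]
  apply Finset.sum_congr rfl
  intro a _
  by_cases h : a = c₀
  · subst h; rw [hI, hw, neg_neg]; simp [neg_smul]; abel
  · rw [hIother a h, hwother a h]
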